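/- Let 𝒜 be the set of positive roots of a deformed root system in ℝ^N with multiplicities m_α (as defined by Sergeev–Veselov, satisfying their main identity), and consider the deformed Calogero-Moser operator L_𝒜 = −Δ + ∑_{α∈𝒜} m_α(m_α+1)(α,α)/(α,x)² + x². Then the function ψ_0 = ∏_{α∈𝒜}(α,x)^{−m_α} e^{−x²/2} satisfies L_𝒜 ψ_0 = λ_0 ψ_0 with eigenvalue λ_0 = N − 2∑_{α∈𝒜} m_α. -/

import Mathlib

open Finset
open scoped Classical

noncomputable section

/-- The standard dot product on `ℝ^N`. -/
def dotR {N : ℕ} (x y : Fin N → ℝ) : ℝ := ∑ i, x i * y i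

/-- The partial derivative `∂/∂xᵢ` of a function on `ℝ^N`. -/
def partialDR {N : ℕ} (i : Fin N) (f : (Fin N → ℝ) → ℝ) : (Fin N → ℝ) → ℝ :=
  fun x => deriv (fun t => f (Function.update x i t)) (x i)

/-- The pseudo-ground state `ψ₀ = ∏_{α∈𝒜}(α,x)^{−m_α} e^{−x²/2}` of the deformed
Calogero-Moser operator. -/
def pseudoGroundState {N : ℕ} (A : Finset (Fin N → ℝ)) (m : (Fin N → ℝ) → ℝ)
    (x : Fin N → ℝ) : ℝ :=
  (∏ α ∈ A, Real.rpow (dotR α x) (-(m α))) * Real.exp (-(∑ i, x i ^ 2) / 2)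

end

noncomputable section Aux

namespace DefCMAux

variable {N : ℕ}

lemma dot_update (α x : Fin N → ℝ) (i : Fin N) (t : ℝ) :
    dotR α (Function.update x i t) = dotR α x + α i * (t - x i) := by
  have h : dotR α (Function.update x i t) - dotR α x = α i * (t - x i) := by
    unfold dotR
    rw [← Finset.sum_sub_distrib, Finset.sum_eq_single i]
    · simp [mul_sub]
    · intro j _ hj
      simp [Function.update_of_ne hj]
    · simp
  linarith

lemma sq_update (x : Fin N → ℝ) (i : Fin N) (t : ℝ) :
    ∑ j, (Function.update x i t j) ^ 2 = (∑ j, x j ^ 2) + (t ^ 2 - x i ^ 2) := by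
  have h : (∑ j, (Function.update x i t j) ^ 2) - ∑ j, x j ^ 2 = t ^ 2 - x i ^ 2 := by
    rw [← Finset.sum_sub_distrib, Finset.sum_eq_single i]
    · simp
    · intro j _ hj
      simp [Function.update_of_ne hj]
    · simp
  linarith

lemma hasDerivAt_psi (A : Finset (Fin N → ℝ)) (m : (Fin N → ℝ) → ℝ) (i : Fin N)
    (y : Fin N → ℝ) (hy : ∀ α ∈ A, dotR α y ≠ 0) :
    HasDerivAt (fun t => pseudoGroundState A m (Function.update y i t))
      (pseudoGroundState A m y * ((∑ α ∈ A, -(m α) * α i / dotR α y) - y i)) (y i) := by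
  have hd : ∀ α : Fin N → ℝ,
      HasDerivAt (fun t => dotR α y + α i * (t - y i)) (α i) (y i) := by
    intro α
    simpa using (((hasDerivAt_id (y i)).sub_const (y i)).const_mul (α i)).const_add (dotR α y)
  -- derivative of the product part
  have hP : HasDerivAt (fun t => ∏ α ∈ A, (dotR α y + α i * (t - y i)) ^ (-(m α)))
      ((∏ α ∈ A, (dotR α y) ^ (-(m α))) * ∑ α ∈ A, -(m α) * α i / dotR α y) (y i) := by
    have h1 : ∀ α ∈ A, HasDerivAt (fun t => (dotR α y + α i * (t - y i)) ^ (-(m α)))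
        (α i * (-(m α)) * (dotR α y) ^ (-(m α) - 1)) (y i) := by
      intro α hα
      have h := (hd α).rpow_const (p := -(m α)) (Or.inl (by simpa using hy α hα))
      simpa using h
    have h2 := HasDerivAt.fun_finsetProd h1
    simp only [smul_eq_mul, sub_self, mul_zero, add_zero] at h2
    refine h2.congr_deriv ?_
    rw [Finset.mul_sum]
    refine Finset.sum_congr rfl fun α hα => ?_
    rw [← Finset.prod_erase_mul A _ hα, Real.rpow_sub_one (hy α hα)]
    ring
  -- derivative of the exponential part
  have hE : HasDerivAt (fun t => Real.exp (-(∑ j, (Function.update y i t j) ^ 2) / 2))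
      (Real.exp (-(∑ j, y j ^ 2) / 2) * (-(y i))) (y i) := by
    have h3 : (fun t => Real.exp (-(∑ j, (Function.update y i t j) ^ 2) / 2))
        = fun t => Real.exp (-((∑ j, y j ^ 2) + (t ^ 2 - y i ^ 2)) / 2) := by
      funext t; rw [sq_update]
    rw [h3]
    have hsq : HasDerivAt (fun t : ℝ => t ^ 2) (2 * y i) (y i) := by
      simpa [mul_comm] using hasDerivAt_pow 2 (y i)
    have hinner : HasDerivAt (fun t : ℝ => -((∑ j, y j ^ 2) + (t ^ 2 - y i ^ 2)) / 2)
        (-(y i)) (y i) := by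
      have h4 := (((hsq.sub_const (y i ^ 2)).const_add (∑ j, y j ^ 2)).neg).div_const 2
      refine h4.congr_deriv ?_
      ring
    have h5 := hinner.exp
    simpa using h5
  have hfun : (fun t => pseudoGroundState A m (Function.update y i t))
      = fun t => (∏ α ∈ A, (dotR α y + α i * (t - y i)) ^ (-(m α))) *
          Real.exp (-(∑ j, (Function.update y i t j) ^ 2) / 2) := by
    funext t
    unfold pseudoGroundState
    congr 1
    exact Finset.prod_congr rfl fun α _ => by rw [Real.rpow_eq_pow, dot_update]
  rw [hfun]
  have hprod := hP.mul hE
  simp only [Function.update_eq_self, sub_self, mul_zero, add_zero] at hprod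
  refine hprod.congr_deriv ?_
  unfold pseudoGroundState
  simp only [Real.rpow_eq_pow]
  ring

/-- `G A m i y` is the value of `∂ᵢ ψ₀` at a regular point `y`. -/
def G (A : Finset (Fin N → ℝ)) (m : (Fin N → ℝ) → ℝ) (i : Fin N) (y : Fin N → ℝ) : ℝ :=
  pseudoGroundState A m y * ((∑ α ∈ A, -(m α) * α i / dotR α y) - y i)

lemma hasDerivAt_G (A : Finset (Fin N → ℝ)) (m : (Fin N → ℝ) → ℝ) (i : Fin N)
    (x : Fin N → ℝ) (hx : ∀ α ∈ A, dotR α x ≠ 0) :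
    HasDerivAt (fun t => G A m i (Function.update x i t))
      (pseudoGroundState A m x *
        (((∑ α ∈ A, -(m α) * α i / dotR α x) - x i) ^ 2 +
          ((∑ α ∈ A, m α * (α i) ^ 2 / (dotR α x) ^ 2) - 1))) (x i) := by
  have hd : ∀ α : Fin N → ℝ,
      HasDerivAt (fun t => dotR α x + α i * (t - x i)) (α i) (x i) := by
    intro α
    simpa using (((hasDerivAt_id (x i)).sub_const (x i)).const_mul (α i)).const_add (dotR α x)
  have hg : HasDerivAt
      (fun t => (∑ α ∈ A, -(m α) * α i / (dotR α x + α i * (t - x i))) - t)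
      ((∑ α ∈ A, m α * (α i) ^ 2 / (dotR α x) ^ 2) - 1) (x i) := by
    have h1 : ∀ α ∈ A, HasDerivAt
        (fun t => -(m α) * α i / (dotR α x + α i * (t - x i)))
        (m α * (α i) ^ 2 / (dotR α x) ^ 2) (x i) := by
      intro α hα
      have hne : dotR α x + α i * (x i - x i) ≠ 0 := by simpa using hx α hα
      have h2 := ((hd α).inv hne).const_mul (-(m α) * α i)
      have h3 : (fun t => -(m α) * α i / (dotR α x + α i * (t - x i)))
          = fun t => -(m α) * α i * (dotR α x + α i * (t - x i))⁻¹ := by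
        funext t; rw [div_eq_mul_inv]
      rw [h3]
      refine h2.congr_deriv ?_
      simp only [sub_self, mul_zero, add_zero]
      ring
    exact (HasDerivAt.fun_sum h1).sub (hasDerivAt_id (x i))
  have hψ := hasDerivAt_psi A m i x hx
  have hfun : (fun t => G A m i (Function.update x i t))
      = fun t => pseudoGroundState A m (Function.update x i t) *
          ((∑ α ∈ A, -(m α) * α i / (dotR α x + α i * (t - x i))) - t) := by
    funext t
    unfold G
    congr 1
    rw [Function.update_self]
    exact congrArg (· - t) (Finset.sum_congr rfl fun α _ => by rw [dot_update])
  rw [hfun]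
  have hprod := hψ.mul hg
  simp only [Function.update_eq_self, sub_self, mul_zero, add_zero] at hprod
  refine hprod.congr_deriv ?_
  ring

lemma partial2 (A : Finset (Fin N → ℝ)) (m : (Fin N → ℝ) → ℝ) (x : Fin N → ℝ)
    (hx : ∀ α ∈ A, dotR α x ≠ 0) (i : Fin N) :
    partialDR i (partialDR i (pseudoGroundState A m)) x
      = pseudoGroundState A m x *
        (((∑ α ∈ A, -(m α) * α i / dotR α x) - x i) ^ 2 +
          ((∑ α ∈ A, m α * (α i) ^ 2 / (dotR α x) ^ 2) - 1)) := by
  have hev : ∀ᶠ t in nhds (x i), ∀ α ∈ A, dotR α (Function.update x i t) ≠ 0 := by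
    rw [Filter.eventually_all_finset]
    intro α hα
    have hc : ContinuousAt (fun t => dotR α (Function.update x i t)) (x i) := by
      simp only [dot_update]
      fun_prop
    exact hc.eventually_ne (by simpa [dot_update] using hx α hα)
  have heq : (fun t => partialDR i (pseudoGroundState A m) (Function.update x i t))
      =ᶠ[nhds (x i)] fun t => G A m i (Function.update x i t) := by
    filter_upwards [hev] with t ht
    have h1 := hasDerivAt_psi A m i (Function.update x i t) ht
    exact h1.deriv
  have : partialDR i (partialDR i (pseudoGroundState A m)) x
      = deriv (fun t => partialDR i (pseudoGroundState A m) (Function.update x i t)) (x i) := rfl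
  rw [this, heq.deriv_eq]
  exact (hasDerivAt_G A m i x hx).deriv

end DefCMAux

end Aux

/-- The pseudo-ground state of the deformed Calogero-Moser operator
`L_𝒜 = −Δ + ∑_{α∈𝒜} m_α(m_α+1)(α,α)/(α,x)² + x²` of a deformed root system `𝒜`
with multiplicities `m_α`.  The defining property of a deformed root system used
here is the Sergeev–Veselov identity
`∑_{α≠β∈𝒜} m_α m_β (α,β)/((α,x)(β,x)) = 0` (identity (12) of Sergeev–Veselov),
which guarantees `L_𝒜 ψ₀ = λ₀ ψ₀` with `λ₀ = N − 2∑_{α∈𝒜} m_α` away from the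
hyperplanes `(α,x)=0`. -/
theorem deformed_CM_pseudo_ground_state (N : ℕ) (A : Finset (Fin N → ℝ))
    (m : (Fin N → ℝ) → ℝ) (hA0 : ∀ α ∈ A, α ≠ 0)
    (hSV : ∀ x : Fin N → ℝ, (∀ α ∈ A, dotR α x ≠ 0) →
      ∑ α ∈ A, ∑ β ∈ A.erase α,
        m α * m β * dotR α β / (dotR α x * dotR β x) = 0)
    (x : Fin N → ℝ) (hx : ∀ α ∈ A, dotR α x ≠ 0) :
    -(∑ i, partialDR i (partialDR i (pseudoGroundState A m)) x) +
      ((∑ α ∈ A, m α * (m α + 1) * dotR α α / (dotR α x) ^ 2) + ∑ i, x i ^ 2) *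
        pseudoGroundState A m x
      = ((N : ℝ) - 2 * ∑ α ∈ A, m α) * pseudoGroundState A m x := by
  -- abbreviations
  set ψ := pseudoGroundState A m x with hψdef
  -- replace second partial derivatives by their explicit values
  have hp2 : ∀ i : Fin N, partialDR i (partialDR i (pseudoGroundState A m)) x
      = ψ * (((∑ α ∈ A, -(m α) * α i / dotR α x) - x i) ^ 2 +
          ((∑ α ∈ A, m α * (α i) ^ 2 / (dotR α x) ^ 2) - 1)) :=
    fun i => DefCMAux.partial2 A m x hx i
  rw [Finset.sum_congr rfl fun i _ => hp2 i, ← Finset.mul_sum]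
  -- the key scalar identity
  have hT2 : ∑ i, ((∑ α ∈ A, -(m α) * α i / dotR α x) * (∑ α ∈ A, -(m α) * α i / dotR α x))
      = ∑ α ∈ A, ∑ β ∈ A, m α * m β * dotR α β / (dotR α x * dotR β x) := by
    have h1 : ∀ i : Fin N,
        (∑ α ∈ A, -(m α) * α i / dotR α x) * (∑ α ∈ A, -(m α) * α i / dotR α x)
        = ∑ α ∈ A, ∑ β ∈ A, (-(m α) * α i / dotR α x) * (-(m β) * β i / dotR β x) :=
      fun i => Finset.sum_mul_sum A A _ _
    rw [Finset.sum_congr rfl fun i _ => h1 i]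
    rw [Finset.sum_comm]
    refine Finset.sum_congr rfl fun α _ => ?_
    rw [Finset.sum_comm]
    refine Finset.sum_congr rfl fun β _ => ?_
    have h2 : m α * m β * dotR α β / (dotR α x * dotR β x)
        = ∑ i, m α * m β * (α i * β i) / (dotR α x * dotR β x) := by
      rw [dotR, Finset.mul_sum, Finset.sum_div]
    rw [h2]
    exact Finset.sum_congr rfl fun i _ => by ring
  have hXT : ∑ i, x i * (∑ α ∈ A, -(m α) * α i / dotR α x) = -∑ α ∈ A, m α := by
    have h1 : ∀ i : Fin N, x i * (∑ α ∈ A, -(m α) * α i / dotR α x)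
        = ∑ α ∈ A, x i * (-(m α) * α i / dotR α x) := fun i => Finset.mul_sum _ _ _
    rw [Finset.sum_congr rfl fun i _ => h1 i, Finset.sum_comm, ← Finset.sum_neg_distrib]
    refine Finset.sum_congr rfl fun α hα => ?_
    have h2 : ∑ i, x i * (-(m α) * α i / dotR α x) = dotR α x * (-(m α)) / dotR α x := by
      rw [dotR, Finset.sum_mul, Finset.sum_div]
      exact Finset.sum_congr rfl fun i _ => by ring
    rw [h2, mul_comm, mul_div_assoc, div_self (hx α hα), mul_one]
  have hC2 : ∑ i, (∑ α ∈ A, m α * (α i) ^ 2 / (dotR α x) ^ 2)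
      = ∑ α ∈ A, m α * dotR α α / (dotR α x) ^ 2 := by
    rw [Finset.sum_comm]
    refine Finset.sum_congr rfl fun α _ => ?_
    have h2 : m α * dotR α α / (dotR α x) ^ 2
        = ∑ i, m α * (α i * α i) / (dotR α x) ^ 2 := by
      rw [dotR, Finset.mul_sum, Finset.sum_div]
    rw [h2]
    exact Finset.sum_congr rfl fun i _ => by ring
  have hdiag : ∑ α ∈ A, ∑ β ∈ A, m α * m β * dotR α β / (dotR α x * dotR β x)
      = ∑ α ∈ A, m α * m α * dotR α α / (dotR α x) ^ 2 := by
    have h1 : ∀ α ∈ A, ∑ β ∈ A, m α * m β * dotR α β / (dotR α x * dotR β x)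
        = m α * m α * dotR α α / (dotR α x * dotR α x)
          + ∑ β ∈ A.erase α, m α * m β * dotR α β / (dotR α x * dotR β x) :=
      fun α hα => (Finset.add_sum_erase A _ hα).symm
    rw [Finset.sum_congr rfl h1, Finset.sum_add_distrib, hSV x hx, add_zero]
    exact Finset.sum_congr rfl fun α _ => by rw [sq]
  -- put everything together
  have hN : (∑ _i : Fin N, (1 : ℝ)) = (N : ℝ) := by simp
  have hsum : ∑ i, (((∑ α ∈ A, -(m α) * α i / dotR α x) - x i) ^ 2 +
        ((∑ α ∈ A, m α * (α i) ^ 2 / (dotR α x) ^ 2) - 1))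
      = (∑ α ∈ A, m α * m α * dotR α α / (dotR α x) ^ 2)
        + (∑ α ∈ A, m α * dotR α α / (dotR α x) ^ 2)
        + 2 * (∑ α ∈ A, m α) + (∑ i, x i ^ 2) - N := by
    have hexp : ∀ i : Fin N, (((∑ α ∈ A, -(m α) * α i / dotR α x) - x i) ^ 2 +
          ((∑ α ∈ A, m α * (α i) ^ 2 / (dotR α x) ^ 2) - 1))
        = ((∑ α ∈ A, -(m α) * α i / dotR α x) * (∑ α ∈ A, -(m α) * α i / dotR α x))
          + (-2) * (x i * (∑ α ∈ A, -(m α) * α i / dotR α x))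
          + (x i ^ 2 + ((∑ α ∈ A, m α * (α i) ^ 2 / (dotR α x) ^ 2) - 1)) :=
      fun i => by ring
    rw [Finset.sum_congr rfl fun i _ => hexp i, Finset.sum_add_distrib,
      Finset.sum_add_distrib, ← Finset.mul_sum, hT2, hdiag, hXT,
      Finset.sum_add_distrib, Finset.sum_sub_distrib, hC2, hN]
    ring
  have hV : ∑ α ∈ A, m α * (m α + 1) * dotR α α / (dotR α x) ^ 2
      = (∑ α ∈ A, m α * m α * dotR α α / (dotR α x) ^ 2)
        + (∑ α ∈ A, m α * dotR α α / (dotR α x) ^ 2) := by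
    rw [← Finset.sum_add_distrib]
    exact Finset.sum_congr rfl fun α _ => by ring
  rw [hV]
  linear_combination (-ψ) * hsum
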